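/- If an infinite word x has uniform frequency α of a letter a, then every word y in the abelian closure of x also has uniform frequency of a, and this frequency equals α. -/

import Mathlib

open Filter

/-- `u` is a factor of the infinite word `x`. -/
def Factor {A : Type*} (x : ℕ → A) (u : List A) : Prop :=
  ∃ i, u = (List.range u.length).map fun k => x (i + k)

/-- Abelian equivalence of finite words. -/
def AbEq {A : Type*} [DecidableEq A] (u v : List A) : Prop :=
  ∀ a, u.count a = v.count a

/-- `y` is in the abelian closure of `x`. -/
def InAbClosure {A : Type*} [DecidableEq A] (x y : ℕ → A) : Prop :=
  ∀ u, Factor y u → ∃ v, Factor x v ∧ AbEq u v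

/-- The maximal number of occurrences of `a` in a length-`n` factor of `x`. -/
noncomputable def supCount {A : Type*} [DecidableEq A] (x : ℕ → A) (a : A) (n : ℕ) : ℕ :=
  sSup {k | ∃ u, Factor x u ∧ u.length = n ∧ u.count a = k}

/-- The minimal number of occurrences of `a` in a length-`n` factor of `x`. -/
noncomputable def infCount {A : Type*} [DecidableEq A] (x : ℕ → A) (a : A) (n : ℕ) : ℕ :=
  sInf {k | ∃ u, Factor x u ∧ u.length = n ∧ u.count a = k}

/-- The count set. -/
def countSet {A : Type*} [DecidableEq A] (x : ℕ → A) (a : A) (n : ℕ) : Set ℕ :=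
  {k | ∃ u, Factor x u ∧ u.length = n ∧ u.count a = k}

lemma countSet_nonempty {A : Type*} [DecidableEq A] (x : ℕ → A) (a : A) (n : ℕ) :
    (countSet x a n).Nonempty := by
  refine ⟨((List.range n).map fun k => x (0 + k)).count a,
    (List.range n).map fun k => x (0 + k), ⟨0, by simp⟩, by simp, rfl⟩

lemma countSet_bddAbove {A : Type*} [DecidableEq A] (x : ℕ → A) (a : A) (n : ℕ) :
    BddAbove (countSet x a n) := by
  refine ⟨n, fun k hk => ?_⟩
  obtain ⟨u, _, hl, hc⟩ := hk
  exact hc ▸ hl ▸ (List.count_le_length (a := a) (l := u))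

lemma countSet_subset {A : Type*} [DecidableEq A] {x y : ℕ → A} (h : InAbClosure x y)
    (a : A) (n : ℕ) : countSet y a n ⊆ countSet x a n := by
  rintro k ⟨u, hu, hl, hc⟩
  obtain ⟨v, hv, hab⟩ := h u hu
  have hperm : u.Perm v := List.perm_iff_count.2 hab
  exact ⟨v, hv, by rw [← hperm.length_eq, hl], by rw [← hab a, hc]⟩

lemma div_cast_le {c d : ℕ} (h : c ≤ d) (n : ℕ) : (c : ℝ) / n ≤ (d : ℝ) / n := by
  rcases Nat.eq_zero_or_pos n with rfl | hn
  · simp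
  · exact div_le_div_of_nonneg_right (by exact_mod_cast h) (by positivity) (c := (n:ℝ))

theorem uniform_frequency_abClosure {A : Type*} [DecidableEq A]
    (x : ℕ → A) (a : A) (α : ℝ)
    (hsup : Tendsto (fun n => (supCount x a n : ℝ) / n) atTop (nhds α))
    (hinf : Tendsto (fun n => (infCount x a n : ℝ) / n) atTop (nhds α)) :
    ∀ y, InAbClosure x y →
      Tendsto (fun n => (supCount y a n : ℝ) / n) atTop (nhds α) ∧
      Tendsto (fun n => (infCount y a n : ℝ) / n) atTop (nhds α) := by
  intro y hy
  have hsub := countSet_subset hy a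
  have hne : ∀ n, (countSet y a n).Nonempty := countSet_nonempty y a
  have hbdd : ∀ n, BddAbove (countSet x a n) := countSet_bddAbove x a
  have hbddy : ∀ n, BddAbove (countSet y a n) := countSet_bddAbove y a
  have h1 : ∀ n, supCount y a n ≤ supCount x a n := fun n =>
    csSup_le_csSup (hbdd n) (hne n) (hsub n)
  have h2 : ∀ n, infCount x a n ≤ infCount y a n := fun n =>
    csInf_le_csInf (OrderBot.bddBelow _) (hne n) (hsub n)
  have h3 : ∀ n, infCount y a n ≤ supCount y a n := fun n =>
    csInf_le_csSup (hne n) (OrderBot.bddBelow _) (hbddy n)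
  constructor
  · exact tendsto_of_tendsto_of_tendsto_of_le_of_le hinf hsup
      (fun n => div_cast_le ((h2 n).trans (h3 n)) n)
      (fun n => div_cast_le (h1 n) n)
  · exact tendsto_of_tendsto_of_tendsto_of_le_of_le hinf hsup
      (fun n => div_cast_le (h2 n) n)
      (fun n => div_cast_le ((h3 n).trans (h1 n)) n)
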